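/- Let λ ∈ ℕ. Then the generalized binomial coefficient C(λ,i) = λ(λ-1)···(λ-i+1)/i! is nonzero for 0 ≤ i ≤ λ and zero for i > λ. Consequently the kernel of the map φ_λ : M(λ) → DM(λ), φ_λ(v_i) = C(λ,i)v_i*, is the span of {v_i : i > λ}, which is the submodule of M(λ) generated by v_{λ+1} and is isomorphic to the Verma module M(-λ-2). -/
import Mathlib


/-- f·v_i = (i+1) v_{i+1} on the Verma module M(λ) with basis v_i = single i 1. -/
noncomputable def Fop : (ℕ →₀ ℂ) →ₗ[ℂ] (ℕ →₀ ℂ) :=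
  Finsupp.lsum ℂ fun i => ((i : ℂ) + 1) • Finsupp.lsingle (i + 1)

/-- e·v_i = (λ+1-i) v_{i-1} (with v_{-1} = 0). -/
noncomputable def Eop (lam : ℂ) : (ℕ →₀ ℂ) →ₗ[ℂ] (ℕ →₀ ℂ) :=
  Finsupp.lsum ℂ fun i => if i = 0 then 0 else (lam + 1 - i) • Finsupp.lsingle (i - 1)

/-- h·v_i = (λ-2i) v_i. -/
noncomputable def Hop (lam : ℂ) : (ℕ →₀ ℂ) →ₗ[ℂ] (ℕ →₀ ℂ) :=
  Finsupp.lsum ℂ fun i => (lam - 2 * i) • Finsupp.lsingle i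

/-- On the dual DM(λ): e·v_i* = i v_{i-1}*. -/
noncomputable def Ed : (ℕ →₀ ℂ) →ₗ[ℂ] (ℕ →₀ ℂ) :=
  Finsupp.lsum ℂ fun i => (i : ℂ) • Finsupp.lsingle (i - 1)

/-- On the dual DM(λ): f·v_i* = (λ-i) v_{i+1}*. -/
noncomputable def Fd (lam : ℂ) : (ℕ →₀ ℂ) →ₗ[ℂ] (ℕ →₀ ℂ) :=
  Finsupp.lsum ℂ fun i => (lam - i) • Finsupp.lsingle (i + 1)

/-- Generalized binomial coefficient C(λ,i) = λ(λ-1)⋯(λ-i+1)/i!. -/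
noncomputable def gbinom (lam : ℂ) (i : ℕ) : ℂ :=
  (∏ j ∈ Finset.range i, (lam - j)) / (Nat.factorial i : ℂ)

/-- φ_λ(v_i) = C(λ,i) v_i*. -/
noncomputable def phiMap (lam : ℂ) : (ℕ →₀ ℂ) →ₗ[ℂ] (ℕ →₀ ℂ) :=
  Finsupp.lsum ℂ fun i => gbinom lam i • Finsupp.lsingle i

/-- ψ_λ(v_i*) = 0 for i ≤ λ, (-1)^i C(i,i-λ-1) v_i for i > λ. -/
noncomputable def psiMap (n : ℕ) : (ℕ →₀ ℂ) →ₗ[ℂ] (ℕ →₀ ℂ) :=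
  Finsupp.lsum ℂ fun i =>
    (if i ≤ n then (0 : ℂ) else (-1) ^ i * (Nat.choose i (i - n - 1) : ℂ)) • Finsupp.lsingle i


lemma lsum_coeff (a : ℕ → ℂ) (σ : ℕ → ℕ) (x : ℕ →₀ ℂ) (k : ℕ) :
    (Finsupp.lsum ℂ (fun i => (a i • Finsupp.lsingle (σ i) : ℂ →ₗ[ℂ] (ℕ →₀ ℂ))) x) k
      = ∑ i ∈ x.support, (if σ i = k then a i * x i else 0) := by
  classical
  rw [Finsupp.lsum_apply, Finsupp.sum_apply, Finsupp.sum]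
  refine Finset.sum_congr rfl fun i _ => ?_
  rw [LinearMap.smul_apply, Finsupp.smul_apply, Finsupp.lsingle_apply, Finsupp.single_apply]
  split_ifs <;> simp

lemma lsum_coeff_eq (a : ℕ → ℂ) (σ : ℕ → ℕ) (x : ℕ →₀ ℂ) (j : ℕ)
    (hσ : ∀ i, σ i = σ j ↔ i = j) :
    (Finsupp.lsum ℂ (fun i => (a i • Finsupp.lsingle (σ i) : ℂ →ₗ[ℂ] (ℕ →₀ ℂ))) x) (σ j) = a j * x j := by
  rw [lsum_coeff]
  have h1 : ∀ i ∈ x.support, (if σ i = σ j then a i * x i else 0)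
      = if i = j then a j * x j else 0 := by
    intro i _
    simp only [hσ i]
    by_cases h : i = j
    · subst h; simp
    · simp [h]
  rw [Finset.sum_congr rfl h1, Finset.sum_ite_eq']
  split_ifs with h
  · rfl
  · rw [Finsupp.notMem_support_iff.mp h, mul_zero]

lemma lsum_coeff_zero (a : ℕ → ℂ) (σ : ℕ → ℕ) (x : ℕ →₀ ℂ) (k : ℕ)
    (h : ∀ i, σ i ≠ k) :
    (Finsupp.lsum ℂ (fun i => (a i • Finsupp.lsingle (σ i) : ℂ →ₗ[ℂ] (ℕ →₀ ℂ))) x) k = 0 := by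
  rw [lsum_coeff]
  exact Finset.sum_eq_zero fun i _ => by simp [h i]

lemma phi_coeff (lam : ℂ) (x : ℕ →₀ ℂ) (k : ℕ) :
    phiMap lam x k = gbinom lam k * x k :=
  lsum_coeff_eq (gbinom lam) (fun i => i) x k (fun i => Iff.rfl)

lemma Hop_coeff (lam : ℂ) (x : ℕ →₀ ℂ) (k : ℕ) :
    Hop lam x k = (lam - 2 * k) * x k :=
  lsum_coeff_eq (fun i => lam - 2 * i) (fun i => i) x k (fun i => Iff.rfl)

lemma Fop_coeff_succ (x : ℕ →₀ ℂ) (k : ℕ) :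
    Fop x (k + 1) = ((k : ℂ) + 1) * x k :=
  lsum_coeff_eq (fun i => (i : ℂ) + 1) (fun i => i + 1) x k (fun i => by show i + 1 = k + 1 ↔ i = k; omega)

lemma Fop_coeff_zero (x : ℕ →₀ ℂ) : Fop x 0 = 0 :=
  lsum_coeff_zero (fun i => (i : ℂ) + 1) (fun i => i + 1) x 0 (fun i => by show i + 1 ≠ 0; omega)

lemma Eop_eq (lam : ℂ) :
    Eop lam = Finsupp.lsum ℂ
      (fun (i : ℕ) => ((if i = 0 then (0:ℂ) else lam + 1 - (i:ℂ)) • Finsupp.lsingle (i - 1) : ℂ →ₗ[ℂ] (ℕ →₀ ℂ))) := by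
  unfold Eop
  congr 1
  funext i
  split_ifs with h <;> simp

lemma Eop_coeff (lam : ℂ) (x : ℕ →₀ ℂ) (k : ℕ) :
    Eop lam x k = (lam - k) * x (k + 1) := by
  rw [Eop_eq, lsum_coeff]
  have h1 : ∀ i ∈ x.support, (if i - 1 = k then (if i = 0 then (0:ℂ) else lam + 1 - i) * x i else 0)
      = if i = k + 1 then (lam - k) * x i else 0 := by
    intro i _
    by_cases h : i = k + 1
    · subst h
      rw [if_pos (by omega : k + 1 - 1 = k), if_neg (Nat.succ_ne_zero k), if_pos rfl]
      push_cast
      ring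
    · by_cases h0 : i = 0
      · subst h0; simp [h]
      · rw [if_neg (by omega : ¬ i - 1 = k), if_neg h]
  rw [Finset.sum_congr rfl h1, Finset.sum_ite_eq']
  split_ifs with h
  · rfl
  · rw [Finsupp.notMem_support_iff.mp h, mul_zero]

lemma gbinom_ne_zero (n i : ℕ) (h : i ≤ n) : gbinom (n : ℂ) i ≠ 0 := by
  unfold gbinom
  apply div_ne_zero
  · rw [Finset.prod_ne_zero_iff]
    intro j hj hc
    rw [Finset.mem_range] at hj
    have hnj : (n : ℂ) = (j : ℂ) := sub_eq_zero.mp hc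
    have : n = j := Nat.cast_injective hnj
    omega
  · exact Nat.cast_ne_zero.mpr (Nat.factorial_ne_zero i)

lemma gbinom_eq_zero (n i : ℕ) (h : i > n) : gbinom (n : ℂ) i = 0 := by
  unfold gbinom
  rw [div_eq_zero_iff]
  left
  exact Finset.prod_eq_zero (Finset.mem_range.mpr h) (sub_self _)

lemma mem_ker_iff (n : ℕ) (x : ℕ →₀ ℂ) :
    x ∈ LinearMap.ker (phiMap (n : ℂ)) ↔ ∀ j ≤ n, x j = 0 := by
  rw [LinearMap.mem_ker]
  constructor
  · intro h j hj
    have h2 : phiMap (n : ℂ) x j = 0 := by rw [h]; rfl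
    rw [phi_coeff] at h2
    exact (mul_eq_zero.mp h2).resolve_left (gbinom_ne_zero n j hj)
  · intro h
    ext k
    rw [phi_coeff]
    rcases le_or_gt k n with hk | hk
    · simp [h k hk]
    · simp [gbinom_eq_zero n k hk]

noncomputable def cc (n m : ℕ) : ℂ := (Nat.choose (n + 1 + m) m : ℂ)

lemma cc_ne_zero (n m : ℕ) : cc n m ≠ 0 :=
  Nat.cast_ne_zero.mpr (Nat.choose_pos (by omega)).ne'

lemma cc_rec (n i : ℕ) : ((i : ℂ) + 1) * cc n (i + 1) = cc n i * ((n : ℂ) + (i : ℂ) + 2) := by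
  have h2 : (n + 2 + i) * Nat.choose (n + 1 + i) i = Nat.choose (n + 2 + i) (i + 1) * (i + 1) := by
    have h := Nat.add_one_mul_choose_eq (n + 1 + i) i
    simpa [Nat.succ_eq_add_one, show n + 1 + i + 1 = n + 2 + i by omega] using h
  have h3 := congrArg (fun m : ℕ => (m : ℂ)) h2
  push_cast at h3
  unfold cc
  rw [show n + 1 + (i + 1) = n + 2 + i by omega]
  push_cast
  linear_combination -h3

noncomputable def Tmap (n : ℕ) : (ℕ →₀ ℂ) →ₗ[ℂ] (ℕ →₀ ℂ) :=
  Finsupp.lsum ℂ fun i => cc n i • Finsupp.lsingle (i + n + 1)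

lemma Tmap_coeff (n : ℕ) (x : ℕ →₀ ℂ) (k : ℕ) :
    Tmap n x (k + n + 1) = cc n k * x k :=
  lsum_coeff_eq (cc n) (fun i => i + n + 1) x k (fun i => by show i + n + 1 = k + n + 1 ↔ i = k; omega)

lemma Tmap_coeff_low (n : ℕ) (x : ℕ →₀ ℂ) (k : ℕ) (hk : k ≤ n) :
    Tmap n x k = 0 :=
  lsum_coeff_zero (cc n) (fun i => i + n + 1) x k (fun i => by show i + n + 1 ≠ k; omega)

lemma Tmap_single (n m : ℕ) (a : ℂ) :
    Tmap n (Finsupp.single m a) = cc n m • Finsupp.single (m + n + 1) a := by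
  rw [Tmap, Finsupp.lsum_single, LinearMap.smul_apply, Finsupp.lsingle_apply]

lemma Fop_single (i : ℕ) (c : ℂ) :
    Fop (Finsupp.single i c) = ((i : ℂ) + 1) • Finsupp.single (i + 1) c := by
  rw [Fop, Finsupp.lsum_single, LinearMap.smul_apply, Finsupp.lsingle_apply]

lemma Hop_single (lam : ℂ) (i : ℕ) (c : ℂ) :
    Hop lam (Finsupp.single i c) = (lam - 2 * i) • Finsupp.single i c := by
  rw [Hop, Finsupp.lsum_single, LinearMap.smul_apply, Finsupp.lsingle_apply]

lemma Eop_single_zero (lam : ℂ) (c : ℂ) : Eop lam (Finsupp.single 0 c) = 0 := by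
  rw [Eop, Finsupp.lsum_single, if_pos rfl]
  rfl

lemma Eop_single_succ (lam : ℂ) (k : ℕ) (c : ℂ) :
    Eop lam (Finsupp.single (k + 1) c) = (lam - k) • Finsupp.single k c := by
  rw [Eop, Finsupp.lsum_single, if_neg (Nat.succ_ne_zero k), LinearMap.smul_apply,
    Finsupp.lsingle_apply, Nat.add_sub_cancel]
  congr 1
  push_cast
  ring

lemma ker_eq_span (n : ℕ) :
    LinearMap.ker (phiMap (n : ℂ)) =
      Submodule.span ℂ {x : ℕ →₀ ℂ | ∃ i > n, x = Finsupp.single i 1} := by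
  apply le_antisymm
  · intro x hx
    rw [mem_ker_iff] at hx
    have hxsum : x = ∑ i ∈ x.support, Finsupp.single i (x i) := by
      conv_lhs => rw [← Finsupp.sum_single x]
      rfl
    rw [hxsum]
    apply Submodule.sum_mem
    intro i hi
    have hxi : x i ≠ 0 := Finsupp.mem_support_iff.mp hi
    have hin : i > n := by
      by_contra h
      exact hxi (hx i (by omega))
    have h1 : Finsupp.single i (x i) = (x i) • Finsupp.single i (1 : ℂ) := by
      rw [Finsupp.smul_single, smul_eq_mul, mul_one]
    rw [h1]
    exact Submodule.smul_mem _ _ (Submodule.subset_span ⟨i, hin, rfl⟩)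
  · rw [Submodule.span_le]
    rintro x ⟨i, hi, rfl⟩
    rw [SetLike.mem_coe, mem_ker_iff]
    intro j hj
    rw [Finsupp.single_apply, if_neg (by omega)]
/-- For λ = n ∈ ℕ: C(n,i) ≠ 0 for i ≤ n and C(n,i) = 0 for i > n; the kernel of
φ_n : M(n) → DM(n) is the span of the v_i with i > n, it is the submodule of M(n)
generated by v_{n+1} (the smallest sl₂-invariant subspace containing v_{n+1}),
and it is isomorphic, as an sl₂-module, to the Verma module M(-n-2). -/
theorem ker_phi_of_nat (n : ℕ) :
    (∀ i ≤ n, gbinom (n : ℂ) i ≠ 0) ∧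
    (∀ i > n, gbinom (n : ℂ) i = 0) ∧
    LinearMap.ker (phiMap (n : ℂ)) =
      Submodule.span ℂ {x : ℕ →₀ ℂ | ∃ i > n, x = Finsupp.single i 1} ∧
    (Finsupp.single (n + 1) (1 : ℂ) ∈ LinearMap.ker (phiMap (n : ℂ)) ∧
      (∀ x ∈ LinearMap.ker (phiMap (n : ℂ)),
        Eop (n : ℂ) x ∈ LinearMap.ker (phiMap (n : ℂ)) ∧
        Fop x ∈ LinearMap.ker (phiMap (n : ℂ)) ∧
        Hop (n : ℂ) x ∈ LinearMap.ker (phiMap (n : ℂ))) ∧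
      (∀ p : Submodule ℂ (ℕ →₀ ℂ), Finsupp.single (n + 1) (1 : ℂ) ∈ p →
        (∀ x ∈ p, Eop (n : ℂ) x ∈ p ∧ Fop x ∈ p ∧ Hop (n : ℂ) x ∈ p) →
        LinearMap.ker (phiMap (n : ℂ)) ≤ p)) ∧
    (∃ T : (ℕ →₀ ℂ) →ₗ[ℂ] (ℕ →₀ ℂ), Function.Injective T ∧
      LinearMap.range T = LinearMap.ker (phiMap (n : ℂ)) ∧
      T ∘ₗ Eop (-(n : ℂ) - 2) = Eop (n : ℂ) ∘ₗ T ∧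
      T ∘ₗ Fop = Fop ∘ₗ T ∧
      T ∘ₗ Hop (-(n : ℂ) - 2) = Hop (n : ℂ) ∘ₗ T) := by

  refine ⟨fun i hi => gbinom_ne_zero n i hi, fun i hi => gbinom_eq_zero n i hi, ker_eq_span n,
    ⟨?_, ?_, ?_⟩, ?_⟩
  · rw [mem_ker_iff]
    intro j hj
    rw [Finsupp.single_apply, if_neg (by omega)]
  · intro x hx
    rw [mem_ker_iff] at hx
    refine ⟨?_, ?_, ?_⟩
    · rw [mem_ker_iff]
      intro j hj
      rw [Eop_coeff]
      rcases eq_or_lt_of_le hj with h | h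
      · subst h
        simp
      · rw [hx (j + 1) (by omega), mul_zero]
    · rw [mem_ker_iff]
      intro j hj
      cases j with
      | zero => exact Fop_coeff_zero x
      | succ k => rw [Fop_coeff_succ, hx k (by omega), mul_zero]
    · rw [mem_ker_iff]
      intro j hj
      rw [Hop_coeff, hx j hj, mul_zero]
  · intro p hp1 hp2
    rw [ker_eq_span, Submodule.span_le]
    rintro x ⟨i, hi, rfl⟩
    have key : ∀ m : ℕ, Finsupp.single (n + 1 + m) (1 : ℂ) ∈ p := by
      intro m
      induction m with
      | zero => simpa using hp1
      | succ k ih =>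
        have hf := (hp2 _ ih).2.1
        rw [Fop_single] at hf
        have hne : ((n + 1 + k : ℕ) : ℂ) + 1 ≠ 0 := by
          have hc : ((n + 1 + k : ℕ) : ℂ) + 1 = ((n + 1 + k + 1 : ℕ) : ℂ) := by push_cast; ring
          rw [hc]
          exact Nat.cast_ne_zero.mpr (by omega)
        have h2 := p.smul_mem (((n + 1 + k : ℕ) : ℂ) + 1)⁻¹ hf
        rw [smul_smul, inv_mul_cancel₀ hne, one_smul] at h2
        exact h2
    have hk := key (i - n - 1)
    rwa [show n + 1 + (i - n - 1) = i by omega] at hk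
  · refine ⟨Tmap n, ?_, ?_, ?_, ?_, ?_⟩
    · rw [← LinearMap.ker_eq_bot, eq_bot_iff]
      intro x hx
      have h0 := LinearMap.mem_ker.mp hx
      rw [Submodule.mem_bot]
      ext k
      have h1 : Tmap n x (k + n + 1) = 0 := by rw [h0]; rfl
      rw [Tmap_coeff] at h1
      have h2 := (mul_eq_zero.mp h1).resolve_left (cc_ne_zero n k)
      simpa using h2
    · apply le_antisymm
      · rintro _ ⟨y, rfl⟩
        rw [mem_ker_iff]
        intro j hj
        exact Tmap_coeff_low n y j hj
      · rw [ker_eq_span, Submodule.span_le]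
        rintro x ⟨i, hi, rfl⟩
        refine ⟨(cc n (i - n - 1))⁻¹ • Finsupp.single (i - n - 1) 1, ?_⟩
        rw [map_smul, Tmap_single, smul_smul, inv_mul_cancel₀ (cc_ne_zero _ _), one_smul,
          show i - n - 1 + n + 1 = i by omega]
    · apply Finsupp.lhom_ext
      intro i c
      simp only [LinearMap.comp_apply]
      cases i with
      | zero =>
        rw [Eop_single_zero, map_zero, Tmap_single, map_smul,
          show 0 + n + 1 = n + 1 from by omega, Eop_single_succ, sub_self, zero_smul, smul_zero]
      | succ k =>
        rw [Eop_single_succ, map_smul, Tmap_single, Tmap_single, map_smul,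
          show k + 1 + n + 1 = (k + n + 1) + 1 from by omega, Eop_single_succ,
          smul_smul, smul_smul]
        congr 1
        push_cast
        linear_combination cc_rec n k
    · apply Finsupp.lhom_ext
      intro i c
      simp only [LinearMap.comp_apply]
      rw [Fop_single, map_smul, Tmap_single, Tmap_single, map_smul, Fop_single,
        show i + 1 + n + 1 = (i + n + 1) + 1 from by omega, smul_smul, smul_smul]
      congr 1
      push_cast
      linear_combination cc_rec n i
    · apply Finsupp.lhom_ext
      intro i c
      simp only [LinearMap.comp_apply]
      rw [Hop_single, map_smul, Tmap_single, map_smul, Hop_single, smul_smul, smul_smul]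
      congr 1
      push_cast
      ring
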